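/- Fix a trajectory with rewards $r_t, r_{t+1}, \ldots, r_T$ and true action-values $Q^\pi(s_{t+h}, a_{t+h})$. Given estimators $\tilde{Q}^{(1)}_h = Q^\pi(s_{t+h},a_{t+h}) + \epsilon^{(1)}_h$ and $\tilde{Q}^{(2)}_h = Q^\pi(s_{t+h},a_{t+h}) + \epsilon^{(2)}_h$ with independent zero-mean noises, define $V^{(i)}_h = \sum_{j=0}^{h-1} \gamma^j r_{t+j} + \gamma^h \tilde{Q}^{(i)}_h$, $h^*_{(1)} = \operatorname{argmax}_h V^{(1)}_h$, and $R^{(1)}_t = V^{(2)}_{h^*_{(1)}}$. Then $\mathbb{E}[R^{(1)}_t] \leq \max_h \left( \sum_{j=0}^{h-1} \gamma^j r_{t+j} + \gamma^h Q^\pi(s_{t+h},a_{t+h}) \right)$. -/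

import Mathlib

open MeasureTheory ProbabilityTheory Finset

/-- Theorem 1 (GEM): the twin back-propagation target does not overestimate the best
multi-step return along a fixed trajectory, given unbiased independent estimators. -/
theorem twin_backpropagation_no_overestimate
    {Ω : Type*} [MeasurableSpace Ω] (μ : Measure Ω) [IsProbabilityMeasure μ]
    (H : ℕ) (γ : ℝ) (hγ0 : 0 ≤ γ) (hγ1 : γ < 1)
    (r : ℕ → ℝ) (q : ℕ → ℝ)  -- rewards r_{t+j} and true values Q^π(s_{t+h}, a_{t+h})
    (ε₁ ε₂ : ℕ → Ω → ℝ)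
    (hmeas₁ : ∀ h, Measurable (ε₁ h)) (hmeas₂ : ∀ h, Measurable (ε₂ h))
    (hint₁ : ∀ h, Integrable (ε₁ h) μ) (hint₂ : ∀ h, Integrable (ε₂ h) μ)
    (hmean₁ : ∀ h, ∫ ω, ε₁ h ω ∂μ = 0) (hmean₂ : ∀ h, ∫ ω, ε₂ h ω ∂μ = 0)
    -- V^{(i)}_h(ω) = ∑_{j<h} γ^j r_j + γ^h (q h + εᵢ h ω)
    (V₁ V₂ : Fin (H + 1) → Ω → ℝ)
    (hV₁ : ∀ (h : Fin (H + 1)) ω,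
      V₁ h ω = (∑ j ∈ range h.val, γ ^ j * r j) + γ ^ h.val * (q h.val + ε₁ h.val ω))
    (hV₂ : ∀ (h : Fin (H + 1)) ω,
      V₂ h ω = (∑ j ∈ range h.val, γ ^ j * r j) + γ ^ h.val * (q h.val + ε₂ h.val ω))
    (hstar : Ω → Fin (H + 1)) (hstar_meas : Measurable hstar)
    (hargmax : ∀ ω h, V₁ h ω ≤ V₁ (hstar ω) ω)
    (hindep_fam : IndepFun (fun ω h => ε₂ h ω) (fun ω h => ε₁ h ω) μ)
    (hindep_sel : IndepFun (fun ω (h : ℕ) => ε₂ h ω) hstar μ) :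
    ∫ ω, V₂ (hstar ω) ω ∂μ ≤
      ⨆ h : Fin (H + 1), ((∑ j ∈ range h.val, γ ^ j * r j) + γ ^ h.val * q h.val) := by
  set A : Fin (H + 1) → ℝ :=
    fun h => (∑ j ∈ range h.val, γ ^ j * r j) + γ ^ h.val * q h.val with hAdef
  set M : ℝ := ⨆ h : Fin (H + 1), A h with hMdef
  have hAM : ∀ h, A h ≤ M :=
    fun h => le_ciSup (Set.Finite.bddAbove (Set.finite_range A)) h
  set S : Fin (H + 1) → Set Ω := fun h => hstar ⁻¹' {h} with hSdef
  have hSmeas : ∀ h, MeasurableSet (S h) :=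
    fun h => hstar_meas (measurableSet_singleton h)
  set χ : Fin (H + 1) → Ω → ℝ := fun h => (S h).indicator (fun _ => (1 : ℝ)) with hχdef
  have hχeq : ∀ h ω, χ h ω = if hstar ω = h then (1 : ℝ) else 0 := by
    intro h ω
    by_cases hc : hstar ω = h <;> simp [χ, S, Set.indicator, hc]
  have hχmeas : ∀ h, Measurable (χ h) :=
    fun h => (measurable_const.indicator (hSmeas h))
  have hχint : ∀ h, Integrable (χ h) μ :=
    fun h => (integrable_const (1 : ℝ)).indicator (hSmeas h)
  -- independence of ε₂ h and χ h
  have hindep : ∀ h : Fin (H + 1), IndepFun (ε₂ h.val) (χ h) μ := by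
    intro h
    have hcomp := hindep_sel.comp (φ := fun f : ℕ → ℝ => f h.val)
      (ψ := fun k : Fin (H + 1) => if k = h then (1 : ℝ) else 0)
      (measurable_pi_apply (X := fun _ : ℕ => ℝ) h.val) (measurable_of_countable _)
    have : χ h = (fun k : Fin (H + 1) => if k = h then (1 : ℝ) else 0) ∘ hstar := by
      funext ω; simp [hχeq, Function.comp]
    rw [this]
    exact hcomp
  have hzero : ∀ h : Fin (H + 1), ∫ ω, ε₂ h.val ω * χ h ω ∂μ = 0 := by
    intro h
    rw [show (fun ω => ε₂ h.val ω * χ h ω) = ε₂ h.val * χ h from rfl] at *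
    rw [(hindep h).integral_mul_eq_mul_integral (hmeas₂ h.val).aestronglyMeasurable
      (hχmeas h).aestronglyMeasurable, hmean₂ h.val, zero_mul]
  have hV₂' : ∀ (h : Fin (H + 1)) ω, V₂ h ω = A h + γ ^ h.val * ε₂ h.val ω := by
    intro h ω; rw [hV₂]; simp only [hAdef]; ring
  -- pointwise decomposition
  have hpt : ∀ ω, V₂ (hstar ω) ω =
      ∑ h : Fin (H + 1), (S h).indicator (V₂ h) ω := by
    intro ω
    have : ∀ h : Fin (H + 1), (S h).indicator (V₂ h) ω =
        if hstar ω = h then V₂ h ω else 0 := by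
      intro h
      by_cases hc : hstar ω = h <;> simp [S, Set.indicator, hc]
    rw [Finset.sum_congr rfl (fun h _ => this h), Finset.sum_ite_eq]
    simp
  have hintV : ∀ h : Fin (H + 1), Integrable (V₂ h) μ := by
    intro h
    have : Integrable (fun ω => A h + γ ^ h.val * ε₂ h.val ω) μ :=
      (integrable_const _).add ((hint₂ h.val).const_mul _)
    exact this.congr (Filter.Eventually.of_forall fun ω => (hV₂' h ω).symm)
  have hindint : ∀ h : Fin (H + 1), Integrable ((S h).indicator (V₂ h)) μ :=
    fun h => (hintV h).indicator (hSmeas h)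
  have hterm : ∀ h : Fin (H + 1),
      ∫ ω, (S h).indicator (V₂ h) ω ∂μ = (μ (S h)).toReal * A h := by
    intro h
    have heq : ∀ ω, (S h).indicator (V₂ h) ω =
        (S h).indicator (fun _ => A h) ω + γ ^ h.val * (ε₂ h.val ω * χ h ω) := by
      intro ω
      by_cases hc : ω ∈ S h <;> simp [Set.indicator, hc, hV₂' h ω, χ]
    rw [integral_congr_ae (Filter.Eventually.of_forall heq),
      integral_add ((integrable_const _).indicator (hSmeas h))
        ((((hint₂ h.val).bdd_mul (c := 1) (hχmeas h).aestronglyMeasurable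
          (Filter.Eventually.of_forall fun ω => by rw [hχeq]; split <;> simp)).congr
          (Filter.Eventually.of_forall fun ω => mul_comm _ _)).const_mul _),
      integral_indicator_const _ (hSmeas h), integral_const_mul, hzero h,
      mul_zero, add_zero, smul_eq_mul, measureReal_def]
  have hsum1 : ∑ h : Fin (H + 1), (μ (S h)).toReal = 1 := by
    have h1 : ∑ h : Fin (H + 1), μ (S h) = 1 := by
      show ∑ h ∈ Finset.univ, μ (hstar ⁻¹' {h}) = 1
      rw [sum_measure_preimage_singleton (μ := μ) (f := hstar) Finset.univ (fun h _ => hstar_meas (measurableSet_singleton h))]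
      simp
    rw [← ENNReal.toReal_sum (fun h _ => measure_ne_top μ _), h1, ENNReal.toReal_one]
  calc ∫ ω, V₂ (hstar ω) ω ∂μ
      = ∫ ω, ∑ h : Fin (H + 1), (S h).indicator (V₂ h) ω ∂μ :=
        integral_congr_ae (Filter.Eventually.of_forall hpt)
    _ = ∑ h : Fin (H + 1), ∫ ω, (S h).indicator (V₂ h) ω ∂μ :=
        integral_finset_sum _ (fun h _ => hindint h)
    _ = ∑ h : Fin (H + 1), (μ (S h)).toReal * A h :=
        Finset.sum_congr rfl (fun h _ => hterm h)
    _ ≤ ∑ h : Fin (H + 1), (μ (S h)).toReal * M :=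
        Finset.sum_le_sum (fun h _ =>
          mul_le_mul_of_nonneg_left (hAM h) ENNReal.toReal_nonneg)
    _ = M := by rw [← Finset.sum_mul, hsum1, one_mul]
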